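/- Let p, d ≥ 1 be integers with p ≥ 2(d+1) and λ > 0 a real with λ(d+1) ≥ 2. Group the first (d+1)·⌊p/(d+1)⌋ of the p vertices into ⌊p/(d+1)⌋ disjoint groups of size d+1 and let Ḡ be the graph whose edge set is the disjoint union of the complete graphs on each group. For each edge (u,v) of Ḡ, let G^{uv} be Ḡ with edge (u,v) removed, and let θ^{uv} be the parameter vector with entries λ on every edge of G^{uv} and 0 elsewhere. Then for all distinct edges (s,t) ≠ (u,v) of Ḡ, the symmetrized Kullback–Leibler divergence satisfies S(θ^{st}‖θ^{uv}) ≤ 8 λ d exp(3λ/2) / exp(λd/2). -/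

import Mathlib

open scoped Classical BigOperators
open Real

noncomputable section

/-- Sign of a Boolean spin: `true ↦ 1`, `false ↦ -1`. -/
def sgn (b : Bool) : ℝ := if b then 1 else -1

/-- Ising energy `Σ_{s<t} θ_{st} x_s x_t`. -/
def energy {p : ℕ} (θ : Fin p → Fin p → ℝ) (x : Fin p → Bool) : ℝ :=
  ∑ s : Fin p, ∑ t : Fin p, if s < t then θ s t * sgn (x s) * sgn (x t) else 0

/-- Partition function `Z(θ)`. -/
def Zpart {p : ℕ} (θ : Fin p → Fin p → ℝ) : ℝ :=
  ∑ x : Fin p → Bool, Real.exp (energy θ x)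

/-- Ising probability mass function `P_θ`. -/
def isingP {p : ℕ} (θ : Fin p → Fin p → ℝ) (x : Fin p → Bool) : ℝ :=
  Real.exp (energy θ x) / Zpart θ

/-- Probability of an event under `n` i.i.d. samples from `P_θ`. -/
def probn {p : ℕ} (n : ℕ) (θ : Fin p → Fin p → ℝ)
    (A : (Fin n → Fin p → Bool) → Prop) : ℝ :=
  ∑ xs : Fin n → Fin p → Bool, if A xs then ∏ i, isingP θ (xs i) else 0

/-- Probability of a single-sample event under `P_θ`. -/
def prob1 {p : ℕ} (θ : Fin p → Fin p → ℝ) (A : (Fin p → Bool) → Prop) : ℝ :=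
  ∑ x : Fin p → Bool, if A x then isingP θ x else 0

/-- A parameter vector: symmetric array vanishing on the diagonal. -/
def IsSymParam {p : ℕ} (θ : Fin p → Fin p → ℝ) : Prop :=
  (∀ s t, θ s t = θ t s) ∧ (∀ s, θ s s = 0)

/-- The class `Θ_{λ,ω}(G)` of admissible parameter vectors for graph `G`. -/
def ParamClass {p : ℕ} (G : SimpleGraph (Fin p)) (lam om : ℝ)
    (θ : Fin p → Fin p → ℝ) : Prop :=
  IsSymParam θ ∧ (∀ s t : Fin p, ¬ G.Adj s t → θ s t = 0) ∧
    (∀ s t : Fin p, G.Adj s t → lam ≤ |θ s t|) ∧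
    (∀ s : Fin p, (∑ t : Fin p, |θ s t|) ≤ om)

/-- The class `G_{p,d}` of graphs with maximum degree at most `d`. -/
def degClass (p d : ℕ) : Set (SimpleGraph (Fin p)) :=
  {G | ∀ v : Fin p, ({u | G.Adj v u}).ncard ≤ d}

/-- The class `G_{p,k}` of graphs with at most `k` edges. -/
def edgeClass (p k : ℕ) : Set (SimpleGraph (Fin p)) :=
  {G | G.edgeSet.ncard ≤ k}

/-- Kullback–Leibler divergence `D(θ‖θ')` between Ising models. -/
def KLdiv {p : ℕ} (θ θ' : Fin p → Fin p → ℝ) : ℝ :=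
  ∑ x : Fin p → Bool, isingP θ x * Real.log (isingP θ x / isingP θ' x)

/-- Symmetrized KL divergence `S(θ‖θ')`. -/
def symKL {p : ℕ} (θ θ' : Fin p → Fin p → ℝ) : ℝ := KLdiv θ θ' + KLdiv θ' θ

/-- The divergence `J(θ‖θ') = D((θ+θ')/2‖θ) + D((θ+θ')/2‖θ')`. -/
def Jdiv {p : ℕ} (θ θ' : Fin p → Fin p → ℝ) : ℝ :=
  KLdiv (fun s t => (θ s t + θ' s t) / 2) θ +
    KLdiv (fun s t => (θ s t + θ' s t) / 2) θ'

/-- Mean parameter `μ_{st}(θ) = E_θ[X_s X_t]`. -/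
def meanPar {p : ℕ} (θ : Fin p → Fin p → ℝ) (s t : Fin p) : ℝ :=
  ∑ x : Fin p → Bool, isingP θ x * (sgn (x s) * sgn (x t))

/-- Adjacency relation of the graph `Ḡ` that is a disjoint union of cliques:
the first `(d+1)·⌊p/(d+1)⌋` vertices are grouped into consecutive blocks of size
`d+1`, and two vertices are adjacent iff they are distinct, lie in the same block,
and belong to one of these blocks. -/
def barAdj (p d : ℕ) (u v : Fin p) : Prop :=
  u ≠ v ∧ u.val / (d + 1) = v.val / (d + 1) ∧
    u.val < (d + 1) * (p / (d + 1)) ∧ v.val < (d + 1) * (p / (d + 1))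

-- basics
lemma sgn_mul_self (b : Bool) : sgn b * sgn b = 1 := by cases b <;> simp [sgn]

lemma sgn_abs (b : Bool) : |sgn b| = 1 := by cases b <;> simp [sgn]

lemma Zpart_pos {p : ℕ} (θ : Fin p → Fin p → ℝ) : 0 < Zpart θ :=
  Finset.sum_pos (fun x _ => Real.exp_pos _) ⟨fun _ => true, Finset.mem_univ _⟩

lemma isingP_pos {p : ℕ} (θ : Fin p → Fin p → ℝ) (x : Fin p → Bool) : 0 < isingP θ x :=
  div_pos (Real.exp_pos _) (Zpart_pos θ)

lemma sum_isingP {p : ℕ} (θ : Fin p → Fin p → ℝ) : ∑ x : Fin p → Bool, isingP θ x = 1 := by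
  unfold isingP
  rw [← Finset.sum_div]
  exact div_self (ne_of_gt (Zpart_pos θ))

lemma meanPar_le_one {p : ℕ} (θ : Fin p → Fin p → ℝ) (s t : Fin p) : meanPar θ s t ≤ 1 := by
  unfold meanPar
  calc ∑ x : Fin p → Bool, isingP θ x * (sgn (x s) * sgn (x t))
      ≤ ∑ x : Fin p → Bool, isingP θ x := by
        apply Finset.sum_le_sum
        intro x _
        have h1 : sgn (x s) * sgn (x t) ≤ 1 := by
          cases hx : x s <;> cases hy : x t <;> norm_num [sgn]
        nlinarith [isingP_pos θ x]
    _ = 1 := sum_isingP θ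

lemma neg_one_le_meanPar {p : ℕ} (θ : Fin p → Fin p → ℝ) (s t : Fin p) :
    -1 ≤ meanPar θ s t := by
  unfold meanPar
  have : (-1 : ℝ) = -(∑ x : Fin p → Bool, isingP θ x) := by rw [sum_isingP]
  rw [this, ← Finset.sum_neg_distrib]
  apply Finset.sum_le_sum
  intro x _
  have h1 : (-1 : ℝ) ≤ sgn (x s) * sgn (x t) := by
    cases hx : x s <;> cases hy : x t <;> norm_num [sgn]
  nlinarith [isingP_pos θ x]

lemma meanPar_comm {p : ℕ} (θ : Fin p → Fin p → ℝ) (s t : Fin p) :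
    meanPar θ s t = meanPar θ t s := by
  unfold meanPar; congr 1; ext x; ring


section generic
variable {α : Type*} [Fintype α]

-- half lemma
lemma sum_ite_rel_half (r : α → α → Prop) [DecidableRel r]
    (htot : ∀ a b : α, a ≠ b → r a b ∨ r b a) (hasym : ∀ a b : α, r a b → ¬ r b a)
    (g : α → α → ℝ) (hsym : ∀ a b, g a b = g b a) :
    ∑ a : α, ∑ b : α, (if r a b then g a b else 0)
      = ((∑ a : α, ∑ b : α, g a b) - ∑ a : α, g a a) / 2 := by
  have key : ∀ a b : α, (if r a b then g a b else 0) + (if r b a then g b a else 0)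
      + (if a = b then g a b else 0) = g a b := by
    intro a b
    by_cases h : a = b
    · subst h
      have : ¬ r a a := fun hr => hasym a a hr hr
      simp [this]
    · rcases htot a b h with hr | hr
      · simp [hr, hasym a b hr, h]
      · simp [hr, hasym b a hr, h, hsym a b]
  have hsum := Finset.sum_congr rfl (fun a (_ : a ∈ Finset.univ) =>
    Finset.sum_congr rfl (fun b (_ : b ∈ Finset.univ) => (key a b)))
  have e1 : ∑ a : α, ∑ b : α, g a b
      = (∑ a : α, ∑ b : α, (if r a b then g a b else 0))
        + (∑ a : α, ∑ b : α, (if r b a then g b a else 0))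
        + ∑ a : α, ∑ b : α, (if a = b then g a b else 0) := by
    rw [← hsum]
    simp [Finset.sum_add_distrib]
  have e2 : ∑ a : α, ∑ b : α, (if r b a then g b a else 0)
      = ∑ a : α, ∑ b : α, (if r a b then g a b else 0) := Finset.sum_comm
  have e3 : ∑ a : α, ∑ b : α, (if a = b then g a b else 0) = ∑ a : α, g a a := by
    apply Finset.sum_congr rfl
    intro a _
    simp [Finset.sum_ite_eq]
  rw [e2, e3] at e1
  linarith

-- pair lemma
lemma sum_ite_rel_pair (r : α → α → Prop) [DecidableRel r]
    (htot : ∀ a b : α, a ≠ b → r a b ∨ r b a) (hasym : ∀ a b : α, r a b → ¬ r b a)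
    (s t : α) (hst : s ≠ t) (X : α → α → ℝ) (hX : ∀ a b, X a b = X b a) :
    ∑ a : α, ∑ b : α, (if r a b ∧ ((a = s ∧ b = t) ∨ (a = t ∧ b = s)) then X a b else 0)
      = X s t := by
  have key : ∀ a b : α,
      (if r a b ∧ ((a = s ∧ b = t) ∨ (a = t ∧ b = s)) then X a b else 0)
      = (if a = s then (if b = t then (if r a b then X a b else 0) else 0) else 0)
        + (if a = t then (if b = s then (if r a b then X a b else 0) else 0) else 0) := by
    intro a b
    by_cases h1 : a = s <;> by_cases h2 : b = t <;> by_cases h3 : a = t <;>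
      by_cases h4 : b = s <;> simp_all <;> try tauto
  have pull : ∀ (P : Prop) [Decidable P] (H : α → ℝ),
      (∑ b : α, if P then H b else 0) = if P then ∑ b : α, H b else 0 := by
    intro P _ H; split <;> simp
  simp_rw [key, Finset.sum_add_distrib, pull, Finset.sum_ite_eq' Finset.univ,
    Finset.mem_univ, if_true]
  rcases htot s t hst with hr | hr
  · simp [hr, hasym s t hr, hX s t]
  · simp [hr, hasym t s hr, hX s t]

-- product formula
lemma sum_prod_bool [DecidableEq α] (f : α → Bool → ℝ) :
    ∑ σ : α → Bool, ∏ a : α, f a (σ a) = ∏ a : α, (f a true + f a false) := by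
  classical
  have := Finset.prod_univ_sum (fun _ : α => (Finset.univ : Finset Bool)) (fun a c => f a c)
  rw [Fintype.piFinset_univ] at this
  rw [← this]
  apply Finset.prod_congr rfl
  intro a _
  simp [Fintype.sum_bool]

-- prod of ite = pow
lemma prod_ite_pow (P : α → Prop) [DecidablePred P] (q : ℝ) :
    ∏ a : α, (if P a then q else 1) = q ^ (Finset.univ.filter P).card := by
  rw [← Finset.prod_filter_mul_prod_filter_not Finset.univ P]
  rw [Finset.prod_congr rfl (fun a ha => if_pos (Finset.mem_filter.mp ha).2)]
  rw [Finset.prod_congr rfl (fun a ha => if_neg (Finset.mem_filter.mp ha).2)]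
  simp [Finset.prod_const]

end generic


lemma log_isingP {p : ℕ} (θ : Fin p → Fin p → ℝ) (x : Fin p → Bool) :
    Real.log (isingP θ x) = energy θ x - Real.log (Zpart θ) := by
  unfold isingP
  rw [Real.log_div (Real.exp_ne_zero _) (ne_of_gt (Zpart_pos θ)), Real.log_exp]

lemma symKL_eq {p : ℕ} (θ θ' : Fin p → Fin p → ℝ) :
    symKL θ θ' = ∑ x : Fin p → Bool,
      (isingP θ x - isingP θ' x) * (energy θ x - energy θ' x) := by
  have hpos : ∀ x : Fin p → Bool, isingP θ x ≠ 0 := by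
    intro x; unfold isingP
    exact ne_of_gt (div_pos (Real.exp_pos _) (Zpart_pos θ))
  have hpos' : ∀ x : Fin p → Bool, isingP θ' x ≠ 0 := by
    intro x; unfold isingP
    exact ne_of_gt (div_pos (Real.exp_pos _) (Zpart_pos θ'))
  set c := Real.log (Zpart θ) - Real.log (Zpart θ') with hc
  have h1 : ∀ x : Fin p → Bool, Real.log (isingP θ x / isingP θ' x)
      = (energy θ x - energy θ' x) - c := by
    intro x
    rw [Real.log_div (hpos x) (hpos' x), log_isingP, log_isingP, hc]; ring
  have h2 : ∀ x : Fin p → Bool, Real.log (isingP θ' x / isingP θ x)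
      = -((energy θ x - energy θ' x) - c) := by
    intro x
    rw [Real.log_div (hpos' x) (hpos x), log_isingP, log_isingP, hc]; ring
  unfold symKL KLdiv
  simp_rw [h1, h2]
  rw [← Finset.sum_add_distrib]
  have : ∀ x : Fin p → Bool,
      isingP θ x * ((energy θ x - energy θ' x) - c)
        + isingP θ' x * -((energy θ x - energy θ' x) - c)
      = (isingP θ x - isingP θ' x) * (energy θ x - energy θ' x)
        + c * (isingP θ' x - isingP θ x) := by
    intro x; ring
  simp_rw [this, Finset.sum_add_distrib, ← Finset.mul_sum, Finset.sum_sub_distrib,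
    sum_isingP]
  simp

lemma symKL_expand {p : ℕ} (θ θ' : Fin p → Fin p → ℝ) :
    symKL θ θ' = ∑ a : Fin p, ∑ b : Fin p,
      (if a < b then (θ a b - θ' a b) * (meanPar θ a b - meanPar θ' a b) else 0) := by
  rw [symKL_eq θ θ']
  have hE : ∀ x : Fin p → Bool, (isingP θ x - isingP θ' x) * (energy θ x - energy θ' x)
      = ∑ a : Fin p, ∑ b : Fin p, (if a < b then
          (θ a b - θ' a b) * ((isingP θ x - isingP θ' x) * (sgn (x a) * sgn (x b)))
          else 0) := by
    intro x
    unfold energy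
    rw [← Finset.sum_sub_distrib, Finset.mul_sum]
    apply Finset.sum_congr rfl; intro a _
    rw [← Finset.sum_sub_distrib, Finset.mul_sum]
    apply Finset.sum_congr rfl; intro b _
    split <;> ring
  simp_rw [hE]
  rw [Finset.sum_comm]
  apply Finset.sum_congr rfl; intro a _
  rw [Finset.sum_comm]
  apply Finset.sum_congr rfl; intro b _
  by_cases hab : a < b
  · simp only [hab, if_true]
    rw [← Finset.mul_sum]
    congr 1
    unfold meanPar
    rw [← Finset.sum_sub_distrib]
    apply Finset.sum_congr rfl; intro x _; ring
  · simp [hab]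

lemma four_point {p : ℕ} (s t u v : Fin p) (hst : s ≠ t) (huv : u ≠ v) (lam : ℝ)
    (Δ X : Fin p → Fin p → ℝ)
    (hΔ : ∀ a b, Δ a b = (if (a=u∧b=v)∨(a=v∧b=u) then lam else 0)
      - (if (a=s∧b=t)∨(a=t∧b=s) then lam else 0))
    (hX : ∀ a b, X a b = X b a) :
    ∑ a : Fin p, ∑ b : Fin p, (if a < b then Δ a b * X a b else 0)
      = lam * X u v - lam * X s t := by
  have key : ∀ a b : Fin p, (if a < b then Δ a b * X a b else 0)
      = (if a < b ∧ ((a=u∧b=v)∨(a=v∧b=u)) then lam * X a b else 0)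
        - (if a < b ∧ ((a=s∧b=t)∨(a=t∧b=s)) then lam * X a b else 0) := by
    intro a b; rw [hΔ]
    by_cases h1 : (a=u∧b=v)∨(a=v∧b=u) <;> by_cases h2 : (a=s∧b=t)∨(a=t∧b=s) <;>
      by_cases h3 : a < b <;> simp [h1, h2, h3] <;> ring
  simp_rw [key, Finset.sum_sub_distrib]
  have A := sum_ite_rel_pair (· < ·) (fun a b h => lt_or_gt_of_ne h) (fun a b => lt_asymm)
    u v huv (fun a b => lam * X a b) (fun a b => by simpa using congrArg (lam * ·) (hX a b))
  have B := sum_ite_rel_pair (· < ·) (fun a b h => lt_or_gt_of_ne h) (fun a b => lt_asymm)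
    s t hst (fun a b => lam * X a b) (fun a b => by simpa using congrArg (lam * ·) (hX a b))
  rw [show (∑ a : Fin p, ∑ b : Fin p, if a < b ∧ ((a=u∧b=v)∨(a=v∧b=u)) then lam * X a b else 0)
      = lam * X u v by convert A,
    show (∑ a : Fin p, ∑ b : Fin p, if a < b ∧ ((a=s∧b=t)∨(a=t∧b=s)) then lam * X a b else 0)
      = lam * X s t by convert B]


def enerSub {p : ℕ} (θ : Fin p → Fin p → ℝ) (Q : Fin p → Prop) [DecidablePred Q]
    (σ : {a : Fin p // Q a} → Bool) : ℝ :=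
  ∑ a : {a : Fin p // Q a}, ∑ b : {a : Fin p // Q a},
    if (a : Fin p) < b then θ a b * sgn (σ a) * sgn (σ b) else 0

lemma energy_split {p : ℕ} (θ : Fin p → Fin p → ℝ) (Q : Fin p → Prop) [DecidablePred Q]
    (hθ : ∀ a b : Fin p, ¬(Q a ↔ Q b) → θ a b = 0) (x : Fin p → Bool) :
    energy θ x = enerSub θ Q (fun a => x a.1)
      + enerSub θ (fun a => ¬ Q a) (fun a => x a.1) := by
  have hsub : ∀ (f : Fin p → ℝ), ∑ a : Fin p, f a
      = (∑ a : {a : Fin p // Q a}, f a.1) + ∑ a : {a : Fin p // ¬ Q a}, f a.1 := by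
    intro f
    rw [← Finset.sum_filter_add_sum_filter_not Finset.univ Q f]
    congr 1
    · exact Finset.sum_subtype _ (by simp) _
    · exact Finset.sum_subtype _ (by simp) _
  unfold energy
  rw [hsub]
  have hcross1 : ∀ a : {a : Fin p // Q a},
      (∑ b : Fin p, if a.1 < b then θ a.1 b * sgn (x a.1) * sgn (x b) else 0)
      = ∑ b : {b : Fin p // Q b}, (if a.1 < b.1 then θ a.1 b.1 * sgn (x a.1) * sgn (x b.1) else 0) := by
    intro a
    rw [hsub]
    have : ∀ b : {b : Fin p // ¬ Q b},
        (if a.1 < b.1 then θ a.1 b.1 * sgn (x a.1) * sgn (x b.1) else 0) = 0 := by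
      intro b
      have hz : θ a.1 b.1 = 0 := hθ _ _ (by simp [a.2, b.2])
      simp [hz]
    rw [Finset.sum_congr rfl (fun b _ => this b)]
    simp
  have hcross2 : ∀ a : {a : Fin p // ¬ Q a},
      (∑ b : Fin p, if a.1 < b then θ a.1 b * sgn (x a.1) * sgn (x b) else 0)
      = ∑ b : {b : Fin p // ¬ Q b}, (if a.1 < b.1 then θ a.1 b.1 * sgn (x a.1) * sgn (x b.1) else 0) := by
    intro a
    rw [hsub]
    have : ∀ b : {b : Fin p // Q b},
        (if a.1 < b.1 then θ a.1 b.1 * sgn (x a.1) * sgn (x b.1) else 0) = 0 := by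
      intro b
      have hz : θ a.1 b.1 = 0 := hθ _ _ (by simp [a.2, b.2])
      simp [hz]
    rw [Finset.sum_congr rfl (fun b _ => this b)]
    simp
  rw [Finset.sum_congr rfl (fun a _ => hcross1 a), Finset.sum_congr rfl (fun a _ => hcross2 a)]
  rfl

lemma sum_factor {p : ℕ} (Q : Fin p → Prop) [DecidablePred Q]
    (F : ({a : Fin p // Q a} → Bool) → ℝ) (G : ({a : Fin p // ¬ Q a} → Bool) → ℝ) :
    (∑ x : Fin p → Bool, F (fun a => x a.1) * G (fun a => x a.1))
      = (∑ σ : {a : Fin p // Q a} → Bool, F σ)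
        * (∑ τ : {a : Fin p // ¬ Q a} → Bool, G τ) := by
  calc (∑ x : Fin p → Bool, F (fun a => x a.1) * G (fun a => x a.1))
      = ∑ z : ({a : Fin p // Q a} → Bool) × ({a : Fin p // ¬ Q a} → Bool), F z.1 * G z.2 :=
        Fintype.sum_equiv (Equiv.piEquivPiSubtypeProd Q (fun _ => Bool))
          _ (fun z => F z.1 * G z.2) (fun x => rfl)
    _ = ∑ σ : {a : Fin p // Q a} → Bool, ∑ τ : {a : Fin p // ¬ Q a} → Bool, F σ * G τ :=
        Fintype.sum_prod_type _
    _ = _ := (Finset.sum_mul_sum _ _ _ _).symm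


-- ## block structure lemmas

lemma div_lt_blocks {p d : ℕ} {s : Fin p} (hs : s.val < (d+1) * (p / (d+1))) :
    s.val / (d+1) < p / (d+1) :=
  (Nat.div_lt_iff_lt_mul (Nat.succ_pos d)).mpr (by rw [mul_comm]; exact hs)

lemma block_ub {p d : ℕ} {s : Fin p} (hs : s.val < (d+1) * (p / (d+1)))
    {a : Fin p} (ha : a.val / (d+1) = s.val / (d+1)) :
    a.val < (d+1) * (p / (d+1)) := by
  have h1 : a.val / (d+1) < p / (d+1) := by rw [ha]; exact div_lt_blocks hs
  have := (Nat.div_lt_iff_lt_mul (Nat.succ_pos d)).mp h1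
  rw [mul_comm] at this; exact this

lemma block_barAdj {p d : ℕ} {s : Fin p} (hs : s.val < (d+1) * (p / (d+1)))
    {a b : Fin p} (ha : a.val / (d+1) = s.val / (d+1))
    (hb : b.val / (d+1) = s.val / (d+1)) (hab : a ≠ b) : barAdj p d a b :=
  ⟨hab, ha.trans hb.symm, block_ub hs ha, block_ub hs hb⟩

lemma card_block {p d : ℕ} {s : Fin p} (hs : s.val < (d+1) * (p / (d+1))) :
    Fintype.card {a : Fin p // a.val / (d+1) = s.val / (d+1)} = d + 1 := by
  have hK : s.val / (d+1) < p / (d+1) := div_lt_blocks hs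
  have hub : (s.val / (d+1)) * (d+1) + (d+1) ≤ p := by
    have h1 : (s.val / (d+1) + 1) * (d+1) ≤ (p / (d+1)) * (d+1) :=
      Nat.mul_le_mul_right _ hK
    have h2 : (p / (d+1)) * (d+1) ≤ p := Nat.div_mul_le_self p (d+1)
    calc (s.val / (d+1)) * (d+1) + (d+1) = (s.val / (d+1) + 1) * (d+1) := by ring
      _ ≤ p := le_trans h1 h2
  refine (Fintype.card_congr ?_).trans (Fintype.card_fin (d+1))
  refine ⟨fun a => ⟨a.1.val % (d+1), Nat.mod_lt _ (Nat.succ_pos d)⟩,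
          fun i => ⟨⟨(s.val / (d+1)) * (d+1) + i.1,
            lt_of_lt_of_le (Nat.add_lt_add_left i.2 _) hub⟩, ?_⟩, ?_, ?_⟩
  · show ((s.val / (d+1)) * (d+1) + i.1) / (d+1) = s.val / (d+1)
    rw [add_comm, Nat.add_mul_div_right _ _ (Nat.succ_pos d),
      Nat.div_eq_of_lt i.2, zero_add]
  · intro a
    apply Subtype.ext; apply Fin.ext
    show (s.val / (d+1)) * (d+1) + a.1.val % (d+1) = a.1.val
    conv_rhs => rw [← Nat.div_add_mod a.1.val (d+1)]
    rw [a.2]; ring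
  · intro i
    apply Fin.ext
    show ((s.val / (d+1)) * (d+1) + i.1) % (d+1) = i.1
    rw [add_comm, Nat.add_mul_mod_self_right, Nat.mod_eq_of_lt i.2]

lemma sum_sgn_eq {α : Type*} [Fintype α] (σ : α → Bool) :
    ∑ a : α, sgn (σ a)
      = 2 * ((Finset.univ.filter (fun a => σ a = true)).card : ℝ) - Fintype.card α := by
  have h : ∀ a, sgn (σ a) = 2 * (if σ a = true then (1:ℝ) else 0) - 1 := by
    intro a; cases h : σ a <;> norm_num [sgn, h]
  simp_rw [h]
  rw [Finset.sum_sub_distrib, ← Finset.mul_sum, Finset.sum_boole, Finset.sum_const,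
    nsmul_eq_mul, mul_one, Finset.card_univ]

-- ## energy formula on a block

lemma enerSub_formula' {p : ℕ} (lam : ℝ) (θ : Fin p → Fin p → ℝ)
    (Q : Fin p → Prop) [DecidablePred Q]
    (st tt : {a : Fin p // Q a}) (hstt : st ≠ tt) (n : ℕ)
    (hcard : Fintype.card {a : Fin p // Q a} = n)
    (hθ : ∀ a b : {a : Fin p // Q a}, a ≠ b →
      θ a.1 b.1 = if (a = st ∧ b = tt) ∨ (a = tt ∧ b = st) then 0 else lam)
    (σ : {a : Fin p // Q a} → Bool) :
    enerSub θ Q σ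
      = lam * ((∑ a : {a : Fin p // Q a}, sgn (σ a))^2 - (n:ℝ)) / 2
        - lam * (sgn (σ st) * sgn (σ tt)) := by
  have key : ∀ a b : {a : Fin p // Q a},
      (if (a : Fin p) < b then θ a.1 b.1 * sgn (σ a) * sgn (σ b) else 0)
      = (if (a : Fin p) < (b : Fin p) then lam * sgn (σ a) * sgn (σ b) else 0)
        - (if ((a : Fin p) < (b : Fin p)) ∧ ((a = st ∧ b = tt) ∨ (a = tt ∧ b = st))
            then lam * sgn (σ a) * sgn (σ b) else 0) := by
    intro a b
    by_cases hab : (a : Fin p) < (b : Fin p)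
    · have hne : a ≠ b := fun h => absurd hab (by rw [h]; exact lt_irrefl _)
      rw [hθ a b hne]
      by_cases hp : ((a = st ∧ b = tt) ∨ (a = tt ∧ b = st))
      · simp [hab, hp]
      · simp [hab, hp]
    · simp [hab]
  unfold enerSub
  rw [Finset.sum_congr rfl (fun a _ => Finset.sum_congr rfl (fun b _ => key a b))]
  simp_rw [Finset.sum_sub_distrib]
  have A := sum_ite_rel_half (fun a b : {a : Fin p // Q a} => (a : Fin p) < (b : Fin p))
      (fun a b h => lt_or_gt_of_ne (fun hh => h (Subtype.ext hh)))
      (fun a b => lt_asymm)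
      (fun a b => lam * sgn (σ a) * sgn (σ b)) (fun a b => by ring)
  have B := sum_ite_rel_pair (fun a b : {a : Fin p // Q a} => (a : Fin p) < (b : Fin p))
      (fun a b h => lt_or_gt_of_ne (fun hh => h (Subtype.ext hh)))
      (fun a b => lt_asymm) st tt hstt
      (fun a b => lam * sgn (σ a) * sgn (σ b)) (fun a b => by ring)
  rw [A]
  rw [show (∑ a : {a : Fin p // Q a}, ∑ b : {a : Fin p // Q a},
      if (a : Fin p) < b ∧ ((a = st ∧ b = tt) ∨ (a = tt ∧ b = st))
        then lam * sgn (σ a) * sgn (σ b) else 0) = lam * sgn (σ st) * sgn (σ tt) by convert B]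
  have e1 : ∑ a : {a : Fin p // Q a}, ∑ b : {a : Fin p // Q a},
        lam * sgn (σ a) * sgn (σ b)
      = lam * ((∑ a : {a : Fin p // Q a}, sgn (σ a))
          * (∑ b : {a : Fin p // Q a}, sgn (σ b))) := by
    rw [Finset.sum_mul_sum, Finset.mul_sum]
    refine Finset.sum_congr rfl fun a _ => ?_
    rw [Finset.mul_sum]
    exact Finset.sum_congr rfl fun b _ => by ring
  have e2 : ∑ a : {a : Fin p // Q a}, lam * sgn (σ a) * sgn (σ a) = lam * (n:ℝ) := by
    have h3 : ∀ a : {a : Fin p // Q a}, lam * sgn (σ a) * sgn (σ a) = lam := by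
      intro a; rw [mul_assoc, sgn_mul_self, mul_one]
    rw [Finset.sum_congr rfl (fun a _ => h3 a), Finset.sum_const, nsmul_eq_mul,
      Finset.card_univ, hcard]
    ring
  rw [e1, e2]
  ring

lemma theta_off_diag {p d : ℕ} (lam : ℝ) (s t : Fin p) (hstE : barAdj p d s t)
    (θ : Fin p → Fin p → ℝ)
    (hθ : θ = fun a b =>
      if barAdj p d a b ∧ ¬((a = s ∧ b = t) ∨ (a = t ∧ b = s)) then lam else 0)
    (a b : {a : Fin p // a.val / (d+1) = s.val / (d+1)}) (hab : a ≠ b) :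
    θ a.1 b.1 = if (a = (⟨s, rfl⟩ : {a : Fin p // a.val / (d+1) = s.val / (d+1)})
        ∧ b = ⟨t, hstE.2.1.symm⟩)
      ∨ (a = ⟨t, hstE.2.1.symm⟩ ∧ b = ⟨s, rfl⟩) then 0 else lam := by
  obtain ⟨hst, hdiv, hsB, htB⟩ := hstE
  have hne' : (a : Fin p) ≠ (b : Fin p) := fun h => hab (Subtype.ext h)
  have hbar : barAdj p d a.1 b.1 := block_barAdj hsB a.2 b.2 hne'
  have hpiff : ((a.1 = s ∧ b.1 = t) ∨ (a.1 = t ∧ b.1 = s))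
      ↔ ((a = ⟨s, rfl⟩ ∧ b = ⟨t, hdiv.symm⟩) ∨ (a = ⟨t, hdiv.symm⟩ ∧ b = ⟨s, rfl⟩)) := by
    constructor
    · rintro (⟨h1, h2⟩ | ⟨h1, h2⟩)
      · exact Or.inl ⟨Subtype.ext h1, Subtype.ext h2⟩
      · exact Or.inr ⟨Subtype.ext h1, Subtype.ext h2⟩
    · rintro (⟨rfl, rfl⟩ | ⟨rfl, rfl⟩)
      · exact Or.inl ⟨rfl, rfl⟩
      · exact Or.inr ⟨rfl, rfl⟩
  rw [hθ]
  by_cases hp : ((a.1 = s ∧ b.1 = t) ∨ (a.1 = t ∧ b.1 = s))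
  · simp [hp, hpiff.mp hp]
  · have hp2 : ¬((a = ⟨s, rfl⟩ ∧ b = ⟨t, hdiv.symm⟩) ∨ (a = ⟨t, hdiv.symm⟩ ∧ b = ⟨s, rfl⟩)) :=
      fun h => hp (hpiff.mpr h)
    simp [hp, hp2, hbar]

-- ## filter cardinalities

lemma card_pair_filter {α : Type*} [Fintype α] [DecidableEq α] (st tt : α) (hstt : st ≠ tt) :
    (Finset.univ.filter (fun a : α => a = st ∨ a = tt)).card = 2 := by
  have h : Finset.univ.filter (fun a : α => a = st ∨ a = tt) = {st, tt} := by
    ext a; simp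
  rw [h, Finset.card_insert_of_notMem (by simp [hstt]), Finset.card_singleton]

lemma card_rest_filter {α : Type*} [Fintype α] [DecidableEq α] (st tt : α) (hstt : st ≠ tt)
    (d : ℕ) (hcard : Fintype.card α = d + 1) (hd : 1 ≤ d) :
    (Finset.univ.filter (fun a : α => ¬(a = st ∨ a = tt))).card = d - 1 := by
  have h := Finset.card_filter_add_card_filter_not
    (s := (Finset.univ : Finset α)) (p := fun a : α => a = st ∨ a = tt)
  rw [card_pair_filter st tt hstt, Finset.card_univ, hcard] at h
  omega

-- ## the per-configuration bound

lemma per_sigma {α : Type*} [Fintype α] [DecidableEq α] (lam : ℝ) (hlam : 0 < lam)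
    (d : ℕ) (hd : 1 ≤ d) (st tt : α) (hstt : st ≠ tt)
    (hcard : Fintype.card α = d + 1) (σ : α → Bool) (hA : σ st ≠ σ tt) :
    Real.exp (lam * ((∑ a : α, sgn (σ a))^2 - ((d+1:ℕ):ℝ)) / 2
        - lam * (sgn (σ st) * sgn (σ tt)))
      ≤ Real.exp (lam * (((d:ℝ)+1)^2 - ((d:ℝ)+1)) / 2 - lam)
        * Real.exp (-(2*lam*((d:ℝ)-1)))
        * ((∏ a : α, (if (a = st ∨ a = tt) then (1:ℝ)
              else if σ a = true then Real.exp (-(lam*((d:ℝ)-1))) else 1))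
          + (∏ a : α, (if (a = st ∨ a = tt) then (1:ℝ)
              else if σ a = false then Real.exp (-(lam*((d:ℝ)-1))) else 1))) := by
  classical
  set q : ℝ := Real.exp (-(lam*((d:ℝ)-1))) with hqdef
  set KT : ℕ := (Finset.univ.filter (fun a : α => σ a = true ∧ ¬(a = st ∨ a = tt))).card
    with hKT
  set KF : ℕ := (Finset.univ.filter (fun a : α => σ a = false ∧ ¬(a = st ∨ a = tt))).card
    with hKF
  -- KT + KF = d - 1
  have hKTKF : KT + KF = d - 1 := by
    have h := Finset.card_filter_add_card_filter_not
      (s := Finset.univ.filter (fun a : α => ¬(a = st ∨ a = tt)))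
      (p := fun a : α => σ a = true)
    rw [Finset.filter_filter, Finset.filter_filter, card_rest_filter st tt hstt d hcard hd]
      at h
    have e1 : (Finset.univ.filter (fun a : α => ¬(a = st ∨ a = tt) ∧ σ a = true)).card
        = KT := by rw [hKT]; congr 1; apply Finset.filter_congr; intro a _; simp; tauto
    have e2 : (Finset.univ.filter (fun a : α => ¬(a = st ∨ a = tt) ∧ ¬(σ a = true))).card
        = KF := by
      rw [hKF]; congr 1; apply Finset.filter_congr; intro a _
      simp only [Bool.not_eq_true]; constructor <;> (intro hh; exact ⟨hh.2, hh.1⟩)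
    rw [e1, e2] at h
    exact h
  -- number of trues is KT + 1
  have hcnt : (Finset.univ.filter (fun a : α => σ a = true)).card = KT + 1 := by
    have h := Finset.card_filter_add_card_filter_not
      (s := Finset.univ.filter (fun a : α => σ a = true))
      (p := fun a : α => a = st ∨ a = tt)
    rw [Finset.filter_filter, Finset.filter_filter] at h
    have e1 : (Finset.univ.filter (fun a : α => σ a = true ∧ (a = st ∨ a = tt))).card
        = 1 := by
      by_cases hs1 : σ st = true
      · have htt : σ tt = false := by
          cases h2 : σ tt
          · rfl
          · exact absurd (by rw [hs1, h2]) hA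
        have hset : Finset.univ.filter (fun a : α => σ a = true ∧ (a = st ∨ a = tt))
            = {st} := by
          ext a
          simp only [Finset.mem_filter, Finset.mem_univ, true_and, Finset.mem_singleton]
          constructor
          · rintro ⟨h1, (rfl | rfl)⟩
            · rfl
            · rw [h1] at htt; exact absurd htt (by simp)
          · rintro rfl; exact ⟨hs1, Or.inl rfl⟩
        rw [hset, Finset.card_singleton]
      · have hs1' : σ st = false := by revert hs1; cases σ st <;> simp
        have htt : σ tt = true := by
          cases h2 : σ tt
          · exact absurd (by rw [hs1', h2]) hA
          · rfl
        have hset : Finset.univ.filter (fun a : α => σ a = true ∧ (a = st ∨ a = tt))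
            = {tt} := by
          ext a
          simp only [Finset.mem_filter, Finset.mem_univ, true_and, Finset.mem_singleton]
          constructor
          · rintro ⟨h1, (rfl | rfl)⟩
            · rw [h1] at hs1'; exact absurd hs1' (by simp)
            · rfl
          · rintro rfl; exact ⟨htt, Or.inr rfl⟩
        rw [hset, Finset.card_singleton]
    have e2 : (Finset.univ.filter (fun a : α => σ a = true ∧ ¬(a = st ∨ a = tt))).card
        = KT := rfl
    rw [e1, e2] at h
    omega
  -- real versions
  have hsumKT : (KT:ℝ) + (KF:ℝ) = (d:ℝ) - 1 := by
    have h := congrArg (fun n : ℕ => (n:ℝ)) hKTKF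
    push_cast [Nat.cast_sub hd] at h
    push_cast
    linarith
  have hKT0 : (0:ℝ) ≤ KT := Nat.cast_nonneg _
  have hKF0 : (0:ℝ) ≤ KF := Nat.cast_nonneg _
  -- the sum of signs
  have hm : ∑ a : α, sgn (σ a) = 2 * ((KT:ℝ) + 1) - ((d:ℝ)+1) := by
    rw [sum_sgn_eq, hcnt, hcard]; push_cast; ring
  have hss : sgn (σ st) * sgn (σ tt) = -1 := by
    cases h1 : σ st <;> cases h2 : σ tt <;> rw [h1, h2] at hA <;>
      first
        | exact absurd rfl hA
        | norm_num [sgn]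
  -- energy identity
  have hE : lam * ((∑ a : α, sgn (σ a))^2 - ((d+1:ℕ):ℝ)) / 2
      - lam * (sgn (σ st) * sgn (σ tt))
      = (lam * (((d:ℝ)+1)^2 - ((d:ℝ)+1)) / 2 - lam) + (-(2*lam*((d:ℝ)-1)))
        + (-(2*lam*(KT:ℝ)*(KF:ℝ))) := by
    rw [hm, hss]
    have hKFr : (KF:ℝ) = (d:ℝ) - 1 - (KT:ℝ) := by linarith
    rw [hKFr]
    push_cast
    ring
  rw [hE, Real.exp_add, Real.exp_add]
  -- products as powers
  have hq1 : (∏ a : α, (if (a = st ∨ a = tt) then (1:ℝ)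
      else if σ a = true then q else 1)) = q ^ KT := by
    rw [hKT, ← prod_ite_pow (fun a : α => σ a = true ∧ ¬(a = st ∨ a = tt)) q]
    refine Finset.prod_congr rfl fun a _ => ?_
    by_cases hPa : a = st ∨ a = tt <;> by_cases hsa : σ a = true <;> simp [hPa, hsa]
  have hq2 : (∏ a : α, (if (a = st ∨ a = tt) then (1:ℝ)
      else if σ a = false then q else 1)) = q ^ KF := by
    rw [hKF, ← prod_ite_pow (fun a : α => σ a = false ∧ ¬(a = st ∨ a = tt)) q]
    refine Finset.prod_congr rfl fun a _ => ?_
    by_cases hPa : a = st ∨ a = tt <;> by_cases hsa : σ a = false <;> simp [hPa, hsa]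
  rw [hq1, hq2]
  -- core inequality
  have hqpow : ∀ n : ℕ, q ^ n = Real.exp ((n:ℝ) * (-(lam*((d:ℝ)-1)))) := by
    intro n; rw [Real.exp_nat_mul]
  have hcore : Real.exp (-(2*lam*(KT:ℝ)*(KF:ℝ))) ≤ q ^ KT + q ^ KF := by
    rcases le_total (KT:ℝ) (KF:ℝ) with hc | hc
    · have h1 : Real.exp (-(2*lam*(KT:ℝ)*(KF:ℝ))) ≤ q ^ KT := by
        rw [hqpow KT]
        apply Real.exp_le_exp.mpr
        rw [← hsumKT]
        nlinarith [mul_nonneg (mul_nonneg hlam.le hKT0) (sub_nonneg.mpr hc)]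
      have h2 : (0:ℝ) ≤ q ^ KF := pow_nonneg (Real.exp_pos _).le _
      linarith
    · have h1 : Real.exp (-(2*lam*(KT:ℝ)*(KF:ℝ))) ≤ q ^ KF := by
        rw [hqpow KF]
        apply Real.exp_le_exp.mpr
        rw [← hsumKT]
        nlinarith [mul_nonneg (mul_nonneg hlam.le hKF0) (sub_nonneg.mpr hc)]
      have h2 : (0:ℝ) ≤ q ^ KT := pow_nonneg (Real.exp_pos _).le _
      linarith
  have hpos : (0:ℝ) < Real.exp (lam * (((d:ℝ)+1)^2 - ((d:ℝ)+1)) / 2 - lam)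
      * Real.exp (-(2*lam*((d:ℝ)-1))) :=
    mul_pos (Real.exp_pos _) (Real.exp_pos _)
  calc Real.exp (lam * (((d:ℝ)+1)^2 - ((d:ℝ)+1)) / 2 - lam)
        * Real.exp (-(2*lam*((d:ℝ)-1))) * Real.exp (-(2*lam*(KT:ℝ)*(KF:ℝ)))
      ≤ Real.exp (lam * (((d:ℝ)+1)^2 - ((d:ℝ)+1)) / 2 - lam)
        * Real.exp (-(2*lam*((d:ℝ)-1))) * (q ^ KT + q ^ KF) := by
        exact mul_le_mul_of_nonneg_left hcore hpos.le
    _ = _ := rfl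

lemma prod_ite_two {α : Type*} [Fintype α] (P : α → Prop) [DecidablePred P] (c e : ℝ)
    (n m : ℕ) (h1 : (Finset.univ.filter P).card = n)
    (h2 : (Finset.univ.filter (fun a => ¬ P a)).card = m) :
    ∏ a : α, (if P a then c else e) = c^n * e^m := by
  rw [← Finset.prod_filter_mul_prod_filter_not Finset.univ P,
    Finset.prod_congr rfl (fun a ha => if_pos (Finset.mem_filter.mp ha).2),
    Finset.prod_congr rfl (fun a ha => if_neg (Finset.mem_filter.mp ha).2),
    Finset.prod_const, Finset.prod_const, h1, h2]

lemma sum_prod_ite {α : Type*} [Fintype α] [DecidableEq α] (P : α → Prop) [DecidablePred P]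
    (q : ℝ) (b : Bool) :
    (∑ σ : α → Bool, ∏ a : α, (if P a then (1:ℝ) else if σ a = b then q else 1))
      = ∏ a : α, (if P a then (2:ℝ) else (1+q)) := by
  refine Eq.trans (Eq.trans ?_
    (sum_prod_bool (fun (a : α) (c : Bool) => if P a then (1:ℝ) else if c = b then q else 1)))
    ?_
  · rfl
  · refine Finset.prod_congr rfl fun a _ => ?_
    by_cases hPa : P a
    · norm_num [hPa]
    · cases b <;> norm_num [hPa] <;> ring

-- ## main block bound

set_option maxHeartbeats 2000000 in
lemma block_bound {p d : ℕ} (lam : ℝ) (hlam : 0 < lam) (hd : 1 ≤ d)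
    (θ : Fin p → Fin p → ℝ) (Q : Fin p → Prop) [DecidablePred Q]
    (st tt : {a : Fin p // Q a}) (hstt : st ≠ tt)
    (hcard : Fintype.card {a : Fin p // Q a} = d + 1)
    (hθQ : ∀ a b : Fin p, ¬(Q a ↔ Q b) → θ a b = 0)
    (hθ : ∀ a b : {a : Fin p // Q a}, a ≠ b →
      θ a.1 b.1 = if (a = st ∧ b = tt) ∨ (a = tt ∧ b = st) then 0 else lam) :
    1 - meanPar θ st.1 tt.1
      ≤ 8 * Real.exp (-(2 * lam * ((d:ℝ) - 1)))
          * (1 + Real.exp (-(lam * ((d:ℝ) - 1)))) ^ (d - 1) := by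
  classical
  have hZ : (0:ℝ) < Zpart θ := Zpart_pos θ
  set q : ℝ := Real.exp (-(lam * ((d:ℝ) - 1))) with hqdef
  set M : ℝ := lam * (((d:ℝ)+1)^2 - ((d:ℝ)+1)) / 2 - lam with hMdef
  have hform := enerSub_formula' lam θ Q st tt hstt (d+1) hcard hθ
  -- step 1 : numerator over Z
  have hμZ : meanPar θ st.1 tt.1 * Zpart θ
      = ∑ x : Fin p → Bool, Real.exp (energy θ x) * (sgn (x st.1) * sgn (x tt.1)) := by
    unfold meanPar
    rw [Finset.sum_mul]
    refine Finset.sum_congr rfl fun x _ => ?_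
    unfold isingP
    field_simp
  have hNumZ : (1 - meanPar θ st.1 tt.1) * Zpart θ
      = ∑ x : Fin p → Bool, Real.exp (energy θ x) * (1 - sgn (x st.1) * sgn (x tt.1)) := by
    rw [sub_mul, one_mul, hμZ]
    unfold Zpart
    rw [← Finset.sum_sub_distrib]
    exact Finset.sum_congr rfl fun x _ => by ring
  -- step 2 : factorization
  have hsplit := energy_split θ Q hθQ
  have hNumF : ∑ x : Fin p → Bool, Real.exp (energy θ x) * (1 - sgn (x st.1) * sgn (x tt.1))
      = (∑ σ : {a : Fin p // Q a} → Bool,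
            Real.exp (enerSub θ Q σ) * (1 - sgn (σ st) * sgn (σ tt)))
        * (∑ τ : {a : Fin p // ¬ Q a} → Bool,
            Real.exp (enerSub θ (fun a => ¬ Q a) τ)) := by
    rw [← sum_factor Q
        (fun σ => Real.exp (enerSub θ Q σ) * (1 - sgn (σ st) * sgn (σ tt)))
        (fun τ => Real.exp (enerSub θ (fun a => ¬ Q a) τ))]
    refine Finset.sum_congr rfl fun x _ => ?_
    show Real.exp (energy θ x) * (1 - sgn (x st.1) * sgn (x tt.1))
      = Real.exp (enerSub θ Q (fun a => x a.1)) * (1 - sgn (x st.1) * sgn (x tt.1))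
        * Real.exp (enerSub θ (fun a => ¬ Q a) (fun a => x a.1))
    rw [hsplit x, Real.exp_add]; ring
  have hZF : Zpart θ
      = (∑ σ : {a : Fin p // Q a} → Bool, Real.exp (enerSub θ Q σ))
        * (∑ τ : {a : Fin p // ¬ Q a} → Bool,
            Real.exp (enerSub θ (fun a => ¬ Q a) τ)) := by
    unfold Zpart
    rw [← sum_factor Q (fun σ => Real.exp (enerSub θ Q σ))
        (fun τ => Real.exp (enerSub θ (fun a => ¬ Q a) τ))]
    refine Finset.sum_congr rfl fun x _ => ?_
    show Real.exp (energy θ x)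
      = Real.exp (enerSub θ Q (fun a => x a.1))
        * Real.exp (enerSub θ (fun a => ¬ Q a) (fun a => x a.1))
    rw [hsplit x, Real.exp_add]
  have hC : (0:ℝ) < ∑ τ : {a : Fin p // ¬ Q a} → Bool,
      Real.exp (enerSub θ (fun a => ¬ Q a) τ) :=
    Finset.sum_pos (fun _ _ => Real.exp_pos _) ⟨fun _ => true, Finset.mem_univ _⟩
  have hDenPos : (0:ℝ) < ∑ σ : {a : Fin p // Q a} → Bool, Real.exp (enerSub θ Q σ) :=
    Finset.sum_pos (fun _ _ => Real.exp_pos _) ⟨fun _ => true, Finset.mem_univ _⟩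
  -- step 3 : ratio form
  have hratio : 1 - meanPar θ st.1 tt.1
      = (∑ σ : {a : Fin p // Q a} → Bool,
          Real.exp (enerSub θ Q σ) * (1 - sgn (σ st) * sgn (σ tt)))
        / (∑ σ : {a : Fin p // Q a} → Bool, Real.exp (enerSub θ Q σ)) := by
    have h1 : 1 - meanPar θ st.1 tt.1
        = (∑ x : Fin p → Bool, Real.exp (energy θ x) * (1 - sgn (x st.1) * sgn (x tt.1)))
          / Zpart θ := by
      rw [eq_div_iff hZ.ne']
      exact hNumZ
    rw [h1, hNumF, hZF, mul_div_mul_right _ _ hC.ne']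
  -- step 4 : denominator lower bound
  have hDen : 2 * Real.exp M ≤ ∑ σ : {a : Fin p // Q a} → Bool,
      Real.exp (enerSub θ Q σ) := by
    have hTF : (fun _ : {a : Fin p // Q a} => true) ≠ (fun _ => false) := by
      intro h; have := congrFun h st; simp at this
    have e1 : enerSub θ Q (fun _ => true) = M := by
      rw [hform]
      have hsum : ∑ a : {a : Fin p // Q a}, sgn ((fun _ => true) a) = ((d:ℝ)+1) := by
        simp only [sgn, if_true]
        rw [Finset.sum_const, nsmul_eq_mul, mul_one, Finset.card_univ, hcard]
        push_cast; ring
      rw [hsum, hMdef]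
      norm_num [sgn]
    have e2 : enerSub θ Q (fun _ => false) = M := by
      rw [hform]
      have hsum : ∑ a : {a : Fin p // Q a}, sgn ((fun _ => false) a) = -((d:ℝ)+1) := by
        simp only [sgn, if_false, Bool.false_eq_true]
        rw [Finset.sum_const, nsmul_eq_mul, Finset.card_univ, hcard]
        push_cast; ring
      rw [hsum, hMdef]
      norm_num [sgn]
      ring_nf
      simp
    have hsub := Finset.sum_le_sum_of_subset_of_nonneg
      (s := ({fun _ => true, fun _ => false} : Finset ({a : Fin p // Q a} → Bool)))
      (t := Finset.univ)
      (f := fun σ => Real.exp (enerSub θ Q σ))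
      (Finset.subset_univ _) (fun i _ _ => (Real.exp_pos _).le)
    rw [Finset.sum_pair hTF, e1, e2] at hsub
    linarith
  -- step 5 : numerator upper bound
  have hNum : (∑ σ : {a : Fin p // Q a} → Bool,
        Real.exp (enerSub θ Q σ) * (1 - sgn (σ st) * sgn (σ tt)))
      ≤ 2 * Real.exp M * Real.exp (-(2*lam*((d:ℝ)-1))) * (8 * (1 + q) ^ (d-1)) := by
    have hstep : ∀ σ : {a : Fin p // Q a} → Bool,
        Real.exp (enerSub θ Q σ) * (1 - sgn (σ st) * sgn (σ tt))
        ≤ 2 * (Real.exp M * Real.exp (-(2*lam*((d:ℝ)-1)))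
            * ((∏ a : {a : Fin p // Q a}, (if (a = st ∨ a = tt) then (1:ℝ)
                  else if σ a = true then q else 1))
              + (∏ a : {a : Fin p // Q a}, (if (a = st ∨ a = tt) then (1:ℝ)
                  else if σ a = false then q else 1)))) := by
      intro σ
      have hrhs0 : (0:ℝ) ≤ 2 * (Real.exp M * Real.exp (-(2*lam*((d:ℝ)-1)))
          * ((∏ a : {a : Fin p // Q a}, (if (a = st ∨ a = tt) then (1:ℝ)
                else if σ a = true then q else 1))
            + (∏ a : {a : Fin p // Q a}, (if (a = st ∨ a = tt) then (1:ℝ)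
                else if σ a = false then q else 1)))) := by
        have hq0 : (0:ℝ) ≤ q := (Real.exp_pos _).le
        have p1 : (0:ℝ) ≤ ∏ a : {a : Fin p // Q a}, (if (a = st ∨ a = tt) then (1:ℝ)
            else if σ a = true then q else 1) := by
          apply Finset.prod_nonneg; intro a _
          split <;> [norm_num; skip]
          split <;> [exact hq0; norm_num]
        have p2 : (0:ℝ) ≤ ∏ a : {a : Fin p // Q a}, (if (a = st ∨ a = tt) then (1:ℝ)
            else if σ a = false then q else 1) := by
          apply Finset.prod_nonneg; intro a _
          split <;> [norm_num; skip]
          split <;> [exact hq0; norm_num]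
        positivity
      by_cases hA : σ st = σ tt
      · have hone : sgn (σ st) * sgn (σ tt) = 1 := by rw [hA]; exact sgn_mul_self _
        rw [hone]
        simpa using hrhs0
      · have h2 : 1 - sgn (σ st) * sgn (σ tt) = 2 := by
          cases h1 : σ st <;> cases h2 : σ tt <;> rw [h1, h2] at hA <;>
            first
              | exact absurd rfl hA
              | norm_num [sgn]
        rw [h2]
        have hps := per_sigma lam hlam d hd st tt hstt hcard σ hA
        rw [← hform σ, ← hqdef, ← hMdef] at hps
        linarith [hps]
    calc (∑ σ : {a : Fin p // Q a} → Bool,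
          Real.exp (enerSub θ Q σ) * (1 - sgn (σ st) * sgn (σ tt)))
        ≤ ∑ σ : {a : Fin p // Q a} → Bool,
            2 * (Real.exp M * Real.exp (-(2*lam*((d:ℝ)-1)))
            * ((∏ a : {a : Fin p // Q a}, (if (a = st ∨ a = tt) then (1:ℝ)
                  else if σ a = true then q else 1))
              + (∏ a : {a : Fin p // Q a}, (if (a = st ∨ a = tt) then (1:ℝ)
                  else if σ a = false then q else 1)))) :=
          Finset.sum_le_sum (fun σ _ => hstep σ)
      _ = 2 * Real.exp M * Real.exp (-(2*lam*((d:ℝ)-1))) * (8 * (1 + q) ^ (d-1)) := by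
          rw [← Finset.mul_sum, ← Finset.mul_sum, Finset.sum_add_distrib]
          have hp1 : (∑ σ : {a : Fin p // Q a} → Bool,
              ∏ a : {a : Fin p // Q a}, (if (a = st ∨ a = tt) then (1:ℝ)
                else if σ a = true then q else 1)) = 4 * (1 + q) ^ (d-1) := by
            have h1 := sum_prod_ite (fun a : {a : Fin p // Q a} => a = st ∨ a = tt) q true
            have h2 := prod_ite_two (fun a : {a : Fin p // Q a} => a = st ∨ a = tt)
              2 (1+q) 2 (d-1) (card_pair_filter st tt hstt)
              (card_rest_filter st tt hstt d hcard hd)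
            have h3 : (2:ℝ)^2 * (1+q)^(d-1) = 4*(1+q)^(d-1) := by norm_num
            exact h1.trans (h2.trans h3)
          have hp2 : (∑ σ : {a : Fin p // Q a} → Bool,
              ∏ a : {a : Fin p // Q a}, (if (a = st ∨ a = tt) then (1:ℝ)
                else if σ a = false then q else 1)) = 4 * (1 + q) ^ (d-1) := by
            have h1 := sum_prod_ite (fun a : {a : Fin p // Q a} => a = st ∨ a = tt) q false
            have h2 := prod_ite_two (fun a : {a : Fin p // Q a} => a = st ∨ a = tt)
              2 (1+q) 2 (d-1) (card_pair_filter st tt hstt)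
              (card_rest_filter st tt hstt d hcard hd)
            have h3 : (2:ℝ)^2 * (1+q)^(d-1) = 4*(1+q)^(d-1) := by norm_num
            exact h1.trans (h2.trans h3)
          rw [hp1, hp2]
          ring
  -- step 6 : conclusion
  rw [hratio]
  have hNumNonneg : (0:ℝ) ≤ 2 * Real.exp M * Real.exp (-(2*lam*((d:ℝ)-1)))
      * (8 * (1 + q) ^ (d-1)) := by
    have hq0 : (0:ℝ) ≤ q := (Real.exp_pos _).le
    positivity
  have hfinal := div_le_div₀ hNumNonneg hNum (by positivity : (0:ℝ) < 2 * Real.exp M) hDen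
  calc (∑ σ : {a : Fin p // Q a} → Bool,
        Real.exp (enerSub θ Q σ) * (1 - sgn (σ st) * sgn (σ tt)))
        / (∑ σ : {a : Fin p // Q a} → Bool, Real.exp (enerSub θ Q σ))
      ≤ (2 * Real.exp M * Real.exp (-(2*lam*((d:ℝ)-1))) * (8 * (1 + q) ^ (d-1)))
        / (2 * Real.exp M) := hfinal
    _ = 8 * Real.exp (-(2 * lam * ((d:ℝ) - 1))) * (1 + q) ^ (d - 1) := by
        rw [div_eq_iff (by positivity : (2 * Real.exp M) ≠ 0)]
        ring


-- ## symmetry of barAdj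

lemma barAdj_symm {p d : ℕ} {u v : Fin p} (h : barAdj p d u v) : barAdj p d v u :=
  ⟨h.1.symm, h.2.1.symm, h.2.2.2, h.2.2.1⟩

-- ## delta evaluation

lemma delta_eval {p d : ℕ} (lam : ℝ) (s t u v : Fin p)
    (hstE : barAdj p d s t) (huvE : barAdj p d u v)
    (hdiff : ¬((s = u ∧ t = v) ∨ (s = v ∧ t = u)))
    (θst θuv : Fin p → Fin p → ℝ)
    (hθst : θst = fun a b =>
      if barAdj p d a b ∧ ¬((a = s ∧ b = t) ∨ (a = t ∧ b = s)) then lam else 0)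
    (hθuv : θuv = fun a b =>
      if barAdj p d a b ∧ ¬((a = u ∧ b = v) ∨ (a = v ∧ b = u)) then lam else 0)
    (a b : Fin p) :
    θst a b - θuv a b = (if (a=u∧b=v)∨(a=v∧b=u) then lam else 0)
      - (if (a=s∧b=t)∨(a=t∧b=s) then lam else 0) := by
  subst hθst hθuv
  simp only
  by_cases h1 : (a=u∧b=v)∨(a=v∧b=u) <;> by_cases h2 : (a=s∧b=t)∨(a=t∧b=s)
  · exfalso
    rcases h2 with ⟨rfl,rfl⟩|⟨rfl,rfl⟩ <;> rcases h1 with ⟨rfl,rfl⟩|⟨rfl,rfl⟩ <;>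
      exact hdiff (by simp)
  · have hbar : barAdj p d a b := by
      rcases h1 with ⟨rfl,rfl⟩|⟨rfl,rfl⟩
      · exact huvE
      · exact barAdj_symm huvE
    simp [h1, h2, hbar]
  · have hbar : barAdj p d a b := by
      rcases h2 with ⟨rfl,rfl⟩|⟨rfl,rfl⟩
      · exact hstE
      · exact barAdj_symm hstE
    simp [h1, h2, hbar]
  · simp [h1, h2]

-- ## edge bound wrapper

lemma edge_bound {p d : ℕ} (lam : ℝ) (hlam : 0 < lam) (hd : 1 ≤ d)
    (s t : Fin p) (hstE : barAdj p d s t)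
    (θ : Fin p → Fin p → ℝ)
    (hθ : θ = fun a b =>
      if barAdj p d a b ∧ ¬((a = s ∧ b = t) ∨ (a = t ∧ b = s)) then lam else 0) :
    1 - meanPar θ s t
      ≤ 8 * Real.exp (-(2 * lam * ((d:ℝ) - 1)))
          * (1 + Real.exp (-(lam * ((d:ℝ) - 1)))) ^ (d - 1) := by
  classical
  have hstt : (⟨s, rfl⟩ : {a : Fin p // a.val / (d+1) = s.val / (d+1)})
      ≠ ⟨t, hstE.2.1.symm⟩ := fun h => hstE.1 (congrArg Subtype.val h)
  have hθQ : ∀ a b : Fin p,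
      ¬((a.val / (d+1) = s.val / (d+1)) ↔ (b.val / (d+1) = s.val / (d+1)))
      → θ a b = 0 := by
    intro a b hiff
    rw [hθ]
    simp only
    split_ifs with hc
    · exact absurd ⟨fun ha => hc.1.2.1 ▸ ha, fun hb => hc.1.2.1.symm ▸ hb⟩ hiff
    · rfl
  have h := block_bound lam hlam hd θ
    (fun a : Fin p => a.val / (d+1) = s.val / (d+1))
    ⟨s, rfl⟩ ⟨t, hstE.2.1.symm⟩ hstt (card_block hstE.2.2.1) hθQ
    (theta_off_diag lam s t hstE θ hθ)
  exact h

-- ## arithmetic lemmas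

lemma arith_easy (d : ℕ) (lam : ℝ) (hlam : 0 < lam)
    (hcase : Real.exp (lam * (d:ℝ) / 2) ≤ 2 * (d:ℝ) * Real.exp (3 * lam / 2)) :
    4 * lam ≤ 8 * lam * (d:ℝ) * Real.exp (3 * lam / 2) / Real.exp (lam * (d:ℝ) / 2) := by
  rw [le_div_iff₀ (Real.exp_pos _)]
  nlinarith [Real.exp_pos (lam * (d:ℝ) / 2), Real.exp_pos (3 * lam / 2)]

lemma arith_hard (d : ℕ) (lam : ℝ) (hd : 1 ≤ d) (hlam : 0 < lam)
    (hl2 : 2 ≤ lam * ((d:ℝ) + 1))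
    (hcase : ¬ Real.exp (lam * (d:ℝ) / 2) ≤ 2 * (d:ℝ) * Real.exp (3 * lam / 2)) :
    8 * Real.exp (-(2 * lam * ((d:ℝ) - 1)))
        * (1 + Real.exp (-(lam * ((d:ℝ) - 1)))) ^ (d - 1)
      ≤ 4 * (d:ℝ) * Real.exp (3 * lam / 2) / Real.exp (lam * (d:ℝ) / 2) := by
  push_neg at hcase
  -- 2d e^{3λ/2} < e^{λd/2}
  have hd4 : (4:ℕ) ≤ d := by
    by_contra hcon
    push_neg at hcon
    have h3 : (d:ℝ) ≤ 3 := by exact_mod_cast Nat.lt_succ_iff.mp hcon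
    have h4 : Real.exp (lam * (d:ℝ) / 2) ≤ Real.exp (3 * lam / 2) :=
      Real.exp_le_exp.mpr (by nlinarith)
    have h5 : (1:ℝ) ≤ 2 * (d:ℝ) := by
      have : (1:ℝ) ≤ (d:ℝ) := by exact_mod_cast hd
      linarith
    nlinarith [Real.exp_pos (3 * lam / 2)]
  have hD : (4:ℝ) ≤ (d:ℝ) := by exact_mod_cast hd4
  -- 2d < e^{λ(d-3)/2}
  have h2d : 2 * (d:ℝ) < Real.exp (lam * ((d:ℝ) - 3) / 2) := by
    have h1 : 2 * (d:ℝ) * Real.exp (3 * lam / 2)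
        < Real.exp (lam * ((d:ℝ) - 3) / 2) * Real.exp (3 * lam / 2) := by
      rw [← Real.exp_add]
      calc 2 * (d:ℝ) * Real.exp (3 * lam / 2) < Real.exp (lam * (d:ℝ) / 2) := hcase
        _ = Real.exp (lam * ((d:ℝ) - 3) / 2 + 3 * lam / 2) := by ring_nf
    exact lt_of_mul_lt_mul_right h1 (Real.exp_pos _).le
  -- q (d-1) ≤ 1
  have hq1 : Real.exp (-(lam * ((d:ℝ) - 1))) * ((d:ℝ) - 1) ≤ 1 := by
    have e1 : Real.exp (lam * ((d:ℝ) - 3))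
        = Real.exp (lam * ((d:ℝ) - 3) / 2) * Real.exp (lam * ((d:ℝ) - 3) / 2) := by
      rw [← Real.exp_add]; ring_nf
    have h3 : 4 * (d:ℝ)^2 < Real.exp (lam * ((d:ℝ) - 3)) := by
      rw [e1]; nlinarith [h2d, hD]
    have h4 : Real.exp (lam * ((d:ℝ) - 3)) ≤ Real.exp (lam * ((d:ℝ) - 1)) :=
      Real.exp_le_exp.mpr (by nlinarith)
    have h5 : ((d:ℝ) - 1) ≤ Real.exp (lam * ((d:ℝ) - 1)) := by nlinarith
    rw [Real.exp_neg, inv_mul_le_iff₀ (Real.exp_pos _)]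
    linarith
  -- (1+q)^(d-1) ≤ e
  have hpow : (1 + Real.exp (-(lam * ((d:ℝ) - 1)))) ^ (d - 1) ≤ Real.exp 1 := by
    have hq0 : (0:ℝ) ≤ Real.exp (-(lam * ((d:ℝ) - 1))) := (Real.exp_pos _).le
    have h6 : (1 + Real.exp (-(lam * ((d:ℝ) - 1)))) ^ (d - 1)
        ≤ (Real.exp (Real.exp (-(lam * ((d:ℝ) - 1))))) ^ (d - 1) := by
      apply pow_le_pow_left₀ (by positivity)
      linarith [Real.add_one_le_exp (Real.exp (-(lam * ((d:ℝ) - 1))))]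
    have h7 : (Real.exp (Real.exp (-(lam * ((d:ℝ) - 1))))) ^ (d - 1)
        = Real.exp (((d-1:ℕ):ℝ) * Real.exp (-(lam * ((d:ℝ) - 1)))) := by
      rw [Real.exp_nat_mul]
    have h8 : ((d-1:ℕ):ℝ) = (d:ℝ) - 1 := by
      push_cast [Nat.cast_sub hd]; ring
    have h9 : Real.exp (((d-1:ℕ):ℝ) * Real.exp (-(lam * ((d:ℝ) - 1)))) ≤ Real.exp 1 := by
      apply Real.exp_le_exp.mpr
      rw [h8]
      linarith [hq1]
    calc (1 + Real.exp (-(lam * ((d:ℝ) - 1)))) ^ (d - 1)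
        ≤ _ := h6
      _ = _ := h7
      _ ≤ _ := h9
  have hexp13 : Real.exp 1 ≤ 3 := by
    have := Real.exp_one_lt_d9
    linarith
  -- final chain
  rw [le_div_iff₀ (Real.exp_pos _)]
  have key : Real.exp (-(2 * lam * ((d:ℝ) - 1))) * Real.exp (lam * (d:ℝ) / 2)
      * Real.exp 2 ≤ Real.exp (3 * lam / 2) := by
    rw [← Real.exp_add, ← Real.exp_add]
    apply Real.exp_le_exp.mpr
    nlinarith
  have hexp23 : (3:ℝ) ≤ Real.exp 2 := by
    linarith [Real.add_one_le_exp (2:ℝ)]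
  set E := Real.exp (-(2 * lam * ((d:ℝ) - 1))) with hE
  set Y := Real.exp (lam * (d:ℝ) / 2) with hY
  set R := Real.exp (3 * lam / 2) with hR
  set P := (1 + Real.exp (-(lam * ((d:ℝ) - 1)))) ^ (d - 1) with hP
  have hE0 : 0 < E := Real.exp_pos _
  have hY0 : 0 < Y := Real.exp_pos _
  have hR0 : 0 < R := Real.exp_pos _
  have hP0 : 0 ≤ P := by positivity
  have hP3 : P ≤ 3 := le_trans hpow hexp13
  have hEY : E * Y * 3 ≤ R := by nlinarith [key, hexp23, mul_pos hE0 hY0]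
  nlinarith [mul_pos hE0 hY0, hEY, hP3, hP0, hD, hR0]


/-- Lemma 4 (Ensemble B for `G_{p,d}`): for the clique ensemble with one edge
removed, uniform weight `λ`, `λ(d+1) ≥ 2`, the symmetrized KL divergence between
any two distinct models is at most `8λd e^{3λ/2} / e^{λd/2}`. -/
theorem symKL_bound_deg_ensemble (p d : ℕ) (lam : ℝ)
    (hp : 2 * (d + 1) ≤ p) (hd : 1 ≤ d) (hlam : 0 < lam)
    (hl2 : 2 ≤ lam * ((d : ℝ) + 1))
    (s t u v : Fin p) (hstE : barAdj p d s t) (huvE : barAdj p d u v)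
    (hdiff : ¬((s = u ∧ t = v) ∨ (s = v ∧ t = u)))
    (θst θuv : Fin p → Fin p → ℝ)
    (hθst : θst = fun a b =>
      if barAdj p d a b ∧ ¬((a = s ∧ b = t) ∨ (a = t ∧ b = s)) then lam else 0)
    (hθuv : θuv = fun a b =>
      if barAdj p d a b ∧ ¬((a = u ∧ b = v) ∨ (a = v ∧ b = u)) then lam else 0) :
    symKL θst θuv ≤ 8 * lam * (d : ℝ) * Real.exp (3 * lam / 2) /
      Real.exp (lam * (d : ℝ) / 2) := by
  have hst : s ≠ t := hstE.1
  have huv : u ≠ v := huvE.1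
  -- the symmetrized KL as a two-term expression
  have hS : symKL θst θuv
      = lam * (meanPar θst u v - meanPar θuv u v)
        - lam * (meanPar θst s t - meanPar θuv s t) := by
    rw [symKL_expand θst θuv]
    exact four_point s t u v hst huv lam
      (fun a b => θst a b - θuv a b)
      (fun a b => meanPar θst a b - meanPar θuv a b)
      (delta_eval lam s t u v hstE huvE hdiff θst θuv hθst hθuv)
      (fun a b => by rw [meanPar_comm θst, meanPar_comm θuv])
  set W : ℝ := 8 * Real.exp (-(2 * lam * ((d:ℝ) - 1)))
      * (1 + Real.exp (-(lam * ((d:ℝ) - 1)))) ^ (d - 1) with hW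
  have hbst : 1 - meanPar θst s t ≤ W := edge_bound lam hlam hd s t hstE θst hθst
  have hbuv : 1 - meanPar θuv u v ≤ W := edge_bound lam hlam hd u v huvE θuv hθuv
  have hA1 : meanPar θst u v ≤ 1 := meanPar_le_one _ _ _
  have hA2 : meanPar θuv s t ≤ 1 := meanPar_le_one _ _ _
  have hB1 : -1 ≤ meanPar θuv u v := neg_one_le_meanPar _ _ _
  have hB2 : -1 ≤ meanPar θst s t := neg_one_le_meanPar _ _ _
  by_cases hcase : Real.exp (lam * (d:ℝ) / 2) ≤ 2 * (d:ℝ) * Real.exp (3 * lam / 2)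
  · -- easy case : trivial bound 4λ
    have hS4 : symKL θst θuv ≤ 4 * lam := by
      rw [hS]
      nlinarith [hlam.le]
    calc symKL θst θuv ≤ 4 * lam := hS4
      _ ≤ 8 * lam * (d : ℝ) * Real.exp (3 * lam / 2) / Real.exp (lam * (d:ℝ) / 2) :=
        arith_easy d lam hlam hcase
  · -- hard case
    have hSW : symKL θst θuv ≤ 2 * lam * W := by
      rw [hS]
      have k1 : meanPar θst u v - meanPar θuv u v ≤ W := by linarith
      have k2 : meanPar θuv s t - meanPar θst s t ≤ W := by linarith
      nlinarith [hlam.le]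
    have harith := arith_hard d lam hd hlam hl2 hcase
    calc symKL θst θuv ≤ 2 * lam * W := hSW
      _ ≤ 2 * lam * (4 * (d:ℝ) * Real.exp (3 * lam / 2) / Real.exp (lam * (d:ℝ) / 2)) := by
          apply mul_le_mul_of_nonneg_left harith (by positivity)
      _ = 8 * lam * (d : ℝ) * Real.exp (3 * lam / 2) / Real.exp (lam * (d:ℝ) / 2) := by
          ring
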